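/- Let 𝒰 be a complete metric space. A function f : ℝ → 𝒰 belongs to W(ℝ, 𝒰) (is equi-Weyl almost periodic with respect to the truncated metric ρ' = min{1,ρ}) if and only if for all ε > 0 and δ > 0 there exists l > 0 such that the set of τ ∈ ℝ satisfying sup_{ξ∈ℝ} meas{t ∈ [ξ, ξ+l] : ρ(f(t), f(t+τ)) ≥ δ} < ε·l is relatively dense in ℝ. -/

import Mathlib

open MeasureTheory

/-- A set `T ⊆ ℝ` is relatively dense. -/
def RelDense (T : Set ℝ) : Prop :=
  ∃ a > (0 : ℝ), ∀ ξ : ℝ, ∃ τ ∈ T, ξ ≤ τ ∧ τ ≤ ξ + a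

lemma RelDense.mono' {S T : Set ℝ} (h : RelDense S) (hst : S ⊆ T) : RelDense T := by
  obtain ⟨a, ha, h⟩ := h
  exact ⟨a, ha, fun ξ => let ⟨τ, hτ, h1, h2⟩ := h ξ; ⟨τ, hst hτ, h1, h2⟩⟩

section aux

variable {U : Type*} [MetricSpace U] {f : ℝ → U}

lemma aux_aesm (hf : AEStronglyMeasurable f volume) (τ : ℝ) :
    AEStronglyMeasurable (fun t => min 1 (dist (f t) (f (t + τ)))) volume := by
  have h2 : AEStronglyMeasurable (fun t => f (t + τ)) volume :=
    hf.comp_measurePreserving (measurePreserving_add_right volume τ)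
  exact (aemeasurable_const.min (hf.dist h2).aemeasurable).aestronglyMeasurable

lemma aux_int (hf : AEStronglyMeasurable f volume) (τ ξ l : ℝ) :
    IntegrableOn (fun t => min 1 (dist (f t) (f (t + τ)))) (Set.Icc ξ (ξ + l)) volume := by
  refine ⟨(aux_aesm hf τ).restrict, ?_⟩
  refine HasFiniteIntegral.of_bounded (C := 1) (ae_of_all _ fun t => ?_)
  rw [Real.norm_eq_abs, abs_of_nonneg (le_min zero_le_one dist_nonneg)]
  exact min_le_left _ _

end aux

theorem stmt7 {U : Type*} [MetricSpace U] [CompleteSpace U]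
    (f : ℝ → U) (hf : AEStronglyMeasurable f volume) :
    (∀ ε > (0 : ℝ), ∃ l > (0 : ℝ), RelDense {τ : ℝ |
        (⨆ ξ : ℝ, (1 / l) * ∫ t in ξ..(ξ + l), min 1 (dist (f t) (f (t + τ)))) < ε}) ↔
    (∀ ε > (0 : ℝ), ∀ δ > (0 : ℝ), ∃ l > (0 : ℝ), RelDense {τ : ℝ |
        (⨆ ξ : ℝ,
            (volume {t ∈ Set.Icc ξ (ξ + l) | δ ≤ dist (f t) (f (t + τ))}).toReal)
          < ε * l}) := by
  set G : ℝ → ℝ → ℝ := fun τ t => min 1 (dist (f t) (f (t + τ))) with hG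
  have hG0 : ∀ τ t, 0 ≤ G τ t := fun τ t => le_min zero_le_one dist_nonneg
  have hG1 : ∀ τ t, G τ t ≤ 1 := fun τ t => min_le_left _ _
  -- interval integral equals set integral over Icc
  have hint_eq : ∀ τ ξ l, 0 < l → (∫ t in ξ..(ξ + l), G τ t)
      = ∫ t in Set.Icc ξ (ξ + l), G τ t := by
    intro τ ξ l hl
    rw [intervalIntegral.integral_of_le (by linarith), ← integral_Icc_eq_integral_Ioc]
  -- basic bounds on the set integral
  have hIbd : ∀ τ ξ l, 0 < l → (0 ≤ ∫ t in Set.Icc ξ (ξ + l), G τ t) ∧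
      (∫ t in Set.Icc ξ (ξ + l), G τ t) ≤ l := by
    intro τ ξ l hl
    constructor
    · exact setIntegral_nonneg measurableSet_Icc fun t _ => hG0 τ t
    · calc (∫ t in Set.Icc ξ (ξ + l), G τ t) ≤ ∫ _t in Set.Icc ξ (ξ + l), (1 : ℝ) :=
            setIntegral_mono_on (aux_int hf τ ξ l) (integrableOn_const (by
              rw [Real.volume_Icc]; exact ENNReal.ofReal_ne_top)) measurableSet_Icc
              fun t _ => hG1 τ t
        _ = l := by
            rw [setIntegral_const, smul_eq_mul, mul_one, measureReal_def, Real.volume_Icc,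
              ENNReal.toReal_ofReal (by linarith), add_sub_cancel_left]
  -- measure of the bad set is at most l
  have hSbd : ∀ (δ τ ξ l : ℝ), 0 < l →
      (volume {t ∈ Set.Icc ξ (ξ + l) | δ ≤ dist (f t) (f (t + τ))}).toReal ≤ l := by
    intro δ τ ξ l hl
    have h1 : volume {t ∈ Set.Icc ξ (ξ + l) | δ ≤ dist (f t) (f (t + τ))}
        ≤ volume (Set.Icc ξ (ξ + l)) := measure_mono fun t ht => ht.1
    have h2 : volume (Set.Icc ξ (ξ + l)) = ENNReal.ofReal l := by
      rw [Real.volume_Icc]; congr 1; ring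
    calc (volume {t ∈ Set.Icc ξ (ξ + l) | δ ≤ dist (f t) (f (t + τ))}).toReal
        ≤ (volume (Set.Icc ξ (ξ + l))).toReal :=
          ENNReal.toReal_mono (by rw [h2]; exact ENNReal.ofReal_ne_top) h1
      _ = l := by rw [h2, ENNReal.toReal_ofReal hl.le]
  have hf2 : ∀ τ : ℝ, AEStronglyMeasurable (fun t => f (t + τ)) volume := fun τ =>
    hf.comp_measurePreserving (measurePreserving_add_right volume τ)
  -- Markov / Chebyshev inequality
  have hMarkov : ∀ (δ' τ ξ l : ℝ), 0 < δ' → δ' ≤ 1 → 0 < l →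
      δ' * (volume {t ∈ Set.Icc ξ (ξ + l) | δ' ≤ dist (f t) (f (t + τ))}).toReal
        ≤ ∫ t in Set.Icc ξ (ξ + l), G τ t := by
    intro δ' τ ξ l hδ'0 hδ'1 hl
    set S := {t ∈ Set.Icc ξ (ξ + l) | δ' ≤ dist (f t) (f (t + τ))} with hSdef
    set μ' := volume.restrict (Set.Icc ξ (ξ + l)) with hμ'
    have hGm : AEMeasurable (fun t => ENNReal.ofReal (G τ t)) μ' :=
      ENNReal.measurable_ofReal.comp_aemeasurable
        ((aux_aesm hf τ).restrict.aemeasurable)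
    have key := mul_meas_ge_le_lintegral₀ hGm (ENNReal.ofReal δ')
    have hsub : S ⊆ {t | ENNReal.ofReal δ' ≤ ENNReal.ofReal (G τ t)} ∩ Set.Icc ξ (ξ + l) := by
      rintro t ⟨ht1, ht2⟩
      exact ⟨ENNReal.ofReal_le_ofReal (le_min hδ'1 ht2), ht1⟩
    have hμS : volume S ≤ μ' {t | ENNReal.ofReal δ' ≤ ENNReal.ofReal (G τ t)} := by
      rw [hμ', Measure.restrict_apply' measurableSet_Icc]
      exact measure_mono hsub
    have hlin : (∫⁻ t, ENNReal.ofReal (G τ t) ∂μ') = ENNReal.ofReal (∫ t in Set.Icc ξ (ξ + l), G τ t) :=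
      (ofReal_integral_eq_lintegral_ofReal (aux_int hf τ ξ l) (ae_of_all _ fun t => hG0 τ t)).symm
    have h2 : ENNReal.ofReal δ' * volume S ≤ ENNReal.ofReal (∫ t in Set.Icc ξ (ξ + l), G τ t) := by
      calc ENNReal.ofReal δ' * volume S ≤ ENNReal.ofReal δ' * μ' {t | ENNReal.ofReal δ' ≤ ENNReal.ofReal (G τ t)} :=
            mul_le_mul_right hμS _
        _ ≤ ∫⁻ t, ENNReal.ofReal (G τ t) ∂μ' := key
        _ = _ := hlin
    have h3 := ENNReal.toReal_mono ENNReal.ofReal_ne_top h2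
    rwa [ENNReal.toReal_mul, ENNReal.toReal_ofReal hδ'0.le,
      ENNReal.toReal_ofReal (hIbd τ ξ l hl).1] at h3
  -- splitting inequality
  have hSplit : ∀ (δ τ ξ l : ℝ), 0 < δ → 0 < l →
      (∫ t in Set.Icc ξ (ξ + l), G τ t)
        ≤ (volume {t ∈ Set.Icc ξ (ξ + l) | δ ≤ dist (f t) (f (t + τ))}).toReal + δ * l := by
    intro δ τ ξ l hδ hl
    set S := {t ∈ Set.Icc ξ (ξ + l) | δ ≤ dist (f t) (f (t + τ))} with hSdef
    set μ' := volume.restrict (Set.Icc ξ (ξ + l)) with hμ'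
    have hSvol : volume (Set.Icc ξ (ξ + l)) = ENNReal.ofReal l := by
      rw [Real.volume_Icc]; congr 1; ring
    have hfin : volume S ≠ ⊤ := by
      refine ne_top_of_le_ne_top ?_ (measure_mono (fun t ht => ht.1))
      rw [hSvol]; exact ENNReal.ofReal_ne_top
    have hSnm : NullMeasurableSet S μ' := by
      have h1 : NullMeasurableSet {t : ℝ | δ ≤ dist (f t) (f (t + τ))} volume :=
        nullMeasurableSet_le aemeasurable_const (hf.dist (hf2 τ)).aemeasurable
      have h2 : NullMeasurableSet S volume := measurableSet_Icc.nullMeasurableSet.inter h1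
      exact h2.mono_ac Measure.restrict_le_self.absolutelyContinuous
    have hlin : ENNReal.ofReal (∫ t in Set.Icc ξ (ξ + l), G τ t)
        = ∫⁻ t, ENNReal.ofReal (G τ t) ∂μ' :=
      ofReal_integral_eq_lintegral_ofReal (aux_int hf τ ξ l) (ae_of_all _ fun t => hG0 τ t)
    have hstep : (∫⁻ t, ENNReal.ofReal (G τ t) ∂μ')
        ≤ ∫⁻ t, (S.indicator (fun _ => 1) t + ENNReal.ofReal δ) ∂μ' := by
      refine lintegral_mono_ae ((ae_restrict_iff' measurableSet_Icc).2 (ae_of_all _ fun t ht => ?_))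
      by_cases hts : t ∈ S
      · rw [Set.indicator_of_mem hts]
        calc ENNReal.ofReal (G τ t) ≤ ENNReal.ofReal 1 := ENNReal.ofReal_le_ofReal (hG1 τ t)
          _ ≤ 1 + ENNReal.ofReal δ := by simp
      · rw [Set.indicator_of_notMem hts, zero_add]
        have hd : dist (f t) (f (t + τ)) < δ := by
          by_contra hcon
          exact hts ⟨ht, not_lt.1 hcon⟩
        exact ENNReal.ofReal_le_ofReal ((min_le_right _ _).trans hd.le)
    have hrhs : (∫⁻ t, (S.indicator (fun _ => 1) t + ENNReal.ofReal δ) ∂μ')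
        = volume S + ENNReal.ofReal δ * ENNReal.ofReal l := by
      rw [lintegral_add_right _ measurable_const, lintegral_indicator₀ hSnm,
        setLIntegral_one, lintegral_const]
      congr 1
      · rw [hμ', Measure.restrict_apply' measurableSet_Icc,
          Set.inter_eq_left.2 (fun t ht => ht.1)]
      · rw [hμ', Measure.restrict_apply_univ, hSvol]
    have hfinal : ENNReal.ofReal (∫ t in Set.Icc ξ (ξ + l), G τ t)
        ≤ ENNReal.ofReal ((volume S).toReal + δ * l) := by
      rw [ENNReal.ofReal_add ENNReal.toReal_nonneg (by positivity),
        ENNReal.ofReal_toReal hfin, hlin, ENNReal.ofReal_mul hδ.le]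
      exact hstep.trans hrhs.le
    exact (ENNReal.ofReal_le_ofReal_iff (by positivity)).1 hfinal
  have hfinS : ∀ (δ τ ξ l : ℝ),
      volume {t ∈ Set.Icc ξ (ξ + l) | δ ≤ dist (f t) (f (t + τ))} ≠ ⊤ := by
    intro δ τ ξ l
    refine ne_top_of_le_ne_top ?_ (measure_mono fun t ht => ht.1)
    rw [Real.volume_Icc]; exact ENNReal.ofReal_ne_top
  constructor
  · -- integral condition ⇒ measure condition
    intro H ε hε δ hδ
    set δ' := min δ 1 with hδ'def
    have hδ'0 : 0 < δ' := lt_min hδ one_pos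
    have hδ'1 : δ' ≤ 1 := min_le_right _ _
    obtain ⟨l, hl, hRD⟩ := H (ε / 2 * δ') (by positivity)
    refine ⟨l, hl, hRD.mono' ?_⟩
    intro τ hτ
    simp only [Set.mem_setOf_eq] at hτ ⊢
    have hbdd : BddAbove (Set.range fun ξ : ℝ =>
        (1 / l) * ∫ t in ξ..(ξ + l), min 1 (dist (f t) (f (t + τ)))) := by
      refine ⟨1, ?_⟩
      rintro x ⟨ξ, rfl⟩
      show (1 / l) * (∫ t in ξ..(ξ + l), G τ t) ≤ 1
      rw [hint_eq τ ξ l hl]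
      have h1 := (hIbd τ ξ l hl).2
      rw [div_mul_eq_mul_div, one_mul, div_le_one hl]
      exact h1
    refine lt_of_le_of_lt (b := ε / 2 * l) (ciSup_le fun ξ => ?_) (by nlinarith)
    have h1 : (volume {t ∈ Set.Icc ξ (ξ + l) | δ ≤ dist (f t) (f (t + τ))}).toReal
        ≤ (volume {t ∈ Set.Icc ξ (ξ + l) | δ' ≤ dist (f t) (f (t + τ))}).toReal :=
      ENNReal.toReal_mono (hfinS δ' τ ξ l)
        (measure_mono fun t ht => ⟨ht.1, le_trans (min_le_left _ _) ht.2⟩)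
    have h2 := hMarkov δ' τ ξ l hδ'0 hδ'1 hl
    have h3 : (1 / l) * (∫ t in ξ..(ξ + l), G τ t) ≤ ⨆ ξ : ℝ,
        (1 / l) * ∫ t in ξ..(ξ + l), min 1 (dist (f t) (f (t + τ))) := le_ciSup hbdd ξ
    rw [hint_eq τ ξ l hl] at h3
    have h4 := lt_of_le_of_lt h3 hτ
    rw [div_mul_eq_mul_div, one_mul] at h4
    have h5 : (∫ t in Set.Icc ξ (ξ + l), G τ t) < ε / 2 * δ' * l := (div_lt_iff₀ hl).1 h4
    nlinarith [mul_le_mul_of_nonneg_left h1 hδ'0.le,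
      ENNReal.toReal_nonneg (a := volume {t ∈ Set.Icc ξ (ξ + l) | δ ≤ dist (f t) (f (t + τ))})]
  · -- measure condition ⇒ integral condition
    intro H ε hε
    obtain ⟨l, hl, hRD⟩ := H (ε / 4) (by positivity) (ε / 4) (by positivity)
    refine ⟨l, hl, hRD.mono' ?_⟩
    intro τ hτ
    simp only [Set.mem_setOf_eq] at hτ ⊢
    have hbdd : BddAbove (Set.range fun ξ : ℝ =>
        (volume {t ∈ Set.Icc ξ (ξ + l) | ε / 4 ≤ dist (f t) (f (t + τ))}).toReal) := by
      exact ⟨l, by rintro x ⟨ξ, rfl⟩; exact hSbd (ε / 4) τ ξ l hl⟩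
    refine lt_of_le_of_lt (b := ε / 2) (ciSup_le fun ξ => ?_) (by linarith)
    show (1 / l) * (∫ t in ξ..(ξ + l), G τ t) ≤ ε / 2
    rw [hint_eq τ ξ l hl]
    have h1 := hSplit (ε / 4) τ ξ l (by positivity) hl
    have h2 : (volume {t ∈ Set.Icc ξ (ξ + l) | ε / 4 ≤ dist (f t) (f (t + τ))}).toReal
        ≤ ⨆ ξ : ℝ, (volume {t ∈ Set.Icc ξ (ξ + l) | ε / 4 ≤ dist (f t) (f (t + τ))}).toReal :=
      le_ciSup hbdd ξ
    have h3 := lt_of_le_of_lt h2 hτ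
    rw [div_mul_eq_mul_div, one_mul, div_le_iff₀ hl]
    nlinarith
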